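/- Let n ≥ 3 and let k be a unit modulo n of multiplicative order α ≥ 2, and assume wt(n,k;α) < ⌊n/2⌋ (so every minimal prime sequence realizing wt(n,k;α) has length at least 2, and hence has a well-defined positive degree and codegree). Let i be a minimal prime sequence realizing wt(n,k;α) whose degree is smallest among all minimal prime sequences realizing wt(n,k;α), and let i′ be a minimal prime sequence realizing wt(n,k;α) whose codegree is largest among all such sequences. Then deg(i) + codeg(i′) = α. -/

import Mathlib

/-- The set `Ω(i, λ) = { b₁k^{i₁} + ⋯ + b_r k^{i_r} mod n : |b_j| ≤ λ_j }` in `ℤ/nℤ`. -/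
def OmegaSet (n : ℕ) (k : (ZMod n)ˣ) {r : ℕ} (i : Fin r → ℕ) (lam : Fin r → ℕ) :
    Set (ZMod n) :=
  { x | ∃ b : Fin r → ℤ, (∀ j, |b j| ≤ (lam j : ℤ)) ∧
      x = ∑ j, (b j : ZMod n) * ((k ^ i j : (ZMod n)ˣ) : ZMod n) }

/-- A `sequence`: a strictly decreasing tuple `α−1 ≥ i₁ > i₂ > ⋯ > i_r ≥ 0`. -/
def IsSeq (α : ℕ) {r : ℕ} (i : Fin r → ℕ) : Prop :=
  (∀ j, i j ≤ α - 1) ∧ StrictAnti i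

/-- `wt(n, k; i)`: the minimal total weight `λ₁ + ⋯ + λ_r` over tuples `λ`
with `Ω(i,λ) = ℤ/nℤ`. -/
noncomputable def wtSeq (n : ℕ) (k : (ZMod n)ˣ) {r : ℕ} (i : Fin r → ℕ) : ℕ :=
  sInf { s | ∃ lam : Fin r → ℕ, OmegaSet n k i lam = Set.univ ∧ ∑ j, lam j = s }

/-- The maximal sequence `Δ : α−1 > α−2 > ⋯ > 1 > 0`. -/
def DeltaSeq (α : ℕ) : Fin α → ℕ := fun j => α - 1 - (j : ℕ)

/-- `wt(n, k; α) := wt(n, k; Δ)`. -/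
noncomputable def wtAlpha (n : ℕ) (k : (ZMod n)ˣ) (α : ℕ) : ℕ :=
  wtSeq n k (DeltaSeq α)

/-- The degree of a sequence: its largest entry. -/
noncomputable def degSeq {r : ℕ} (i : Fin r → ℕ) : ℕ := sSup (Set.range i)

/-- The codegree of a sequence: its smallest nonzero entry. -/
noncomputable def codegSeq {r : ℕ} (i : Fin r → ℕ) : ℕ :=
  sInf { v | v ∈ Set.range i ∧ v ≠ 0 }

/-- A minimal prime sequence realizing `wt(n,k;α)`: a reduced sequence (i.e. one
containing `0`) of weight `wt(n,k;α)` such that no proper reduced subsequence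
has weight `wt(n,k;α)`. -/
def IsMinimalPrimeSeq (n : ℕ) (k : (ZMod n)ˣ) (α : ℕ) {r : ℕ} (i : Fin r → ℕ) : Prop :=
  IsSeq α i ∧ 0 ∈ Set.range i ∧ wtSeq n k i = wtAlpha n k α ∧
    ∀ (q : ℕ) (i₀ : Fin q → ℕ), IsSeq α i₀ → 0 ∈ Set.range i₀ →
      Set.range i₀ ⊆ Set.range i → Set.range i₀ ≠ Set.range i →
      wtSeq n k i₀ ≠ wtAlpha n k α

/-- `deg(n,k;α)`: the smallest degree of a minimal prime sequence realizing `wt(n,k;α)`. -/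
noncomputable def degNK (n : ℕ) (k : (ZMod n)ˣ) (α : ℕ) : ℕ :=
  sInf { d | ∃ (r : ℕ) (i : Fin r → ℕ), IsMinimalPrimeSeq n k α i ∧ degSeq i = d }

section aux
variable {n : ℕ} {k : (ZMod n)ˣ}

lemma OmegaSet_comp {r s : ℕ} (i : Fin r → ℕ) (lam : Fin r → ℕ) (e : Fin s ≃ Fin r) :
    OmegaSet n k (i ∘ e) (lam ∘ e) = OmegaSet n k i lam := by
  ext x
  simp only [OmegaSet, Set.mem_setOf_eq]
  constructor
  · rintro ⟨b, hb, rfl⟩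
    refine ⟨b ∘ e.symm, fun j => by simpa using hb (e.symm j), ?_⟩
    rw [← Equiv.sum_comp e (fun j => ((b ∘ e.symm) j : ZMod n) * ((k ^ i j : (ZMod n)ˣ) : ZMod n))]
    simp [Function.comp]
  · rintro ⟨b, hb, rfl⟩
    refine ⟨b ∘ e, fun j => hb (e j), ?_⟩
    rw [← Equiv.sum_comp e (fun j => ((b j : ℤ) : ZMod n) * ((k ^ i j : (ZMod n)ˣ) : ZMod n))]
    rfl

lemma wtSeq_comp_equiv {r s : ℕ} (i : Fin r → ℕ) (e : Fin s ≃ Fin r) :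
    wtSeq n k (i ∘ e) = wtSeq n k i := by
  unfold wtSeq
  congr 1
  ext w
  simp only [Set.mem_setOf_eq]
  constructor
  · rintro ⟨lam, hΩ, rfl⟩
    refine ⟨lam ∘ e.symm, ?_, ?_⟩
    · rw [← hΩ]
      have : (lam ∘ e.symm) ∘ e = lam := by ext j; simp
      rw [← OmegaSet_comp i (lam ∘ e.symm) e, this]
    · exact (Equiv.sum_comp e.symm lam)
  · rintro ⟨lam, hΩ, rfl⟩
    exact ⟨lam ∘ e, by rw [OmegaSet_comp i lam e, hΩ], Equiv.sum_comp e lam⟩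

lemma wtSeq_eq_of_range_eq {r s : ℕ} {i : Fin r → ℕ} {i' : Fin s → ℕ}
    (hi : Function.Injective i) (hi' : Function.Injective i')
    (h : Set.range i' = Set.range i) : wtSeq n k i' = wtSeq n k i := by
  have h1 : ∀ j : Fin s, ∃ j', i j' = i' j := fun j => by
    have : i' j ∈ Set.range i := h ▸ Set.mem_range_self j
    exact this
  have h2 : ∀ j : Fin r, ∃ j', i' j' = i j := fun j => by
    have : i j ∈ Set.range i' := h.symm ▸ Set.mem_range_self j
    exact this
  choose f hf using h1
  choose g hg using h2
  let e : Fin s ≃ Fin r :=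
    ⟨f, g, fun j => hi' (by rw [hg, hf]), fun j => hi (by rw [hf, hg])⟩
  have : i ∘ e = i' := by ext j; exact hf j
  rw [← this, wtSeq_comp_equiv]

lemma wtSeq_shift {r : ℕ} (i : Fin r → ℕ) (m : ℕ) :
    wtSeq n k (fun j => (i j + m) % orderOf k) = wtSeq n k i := by
  have key : ∀ lam : Fin r → ℕ,
      OmegaSet n k (fun j => (i j + m) % orderOf k) lam =
        (fun y => y * ((k : ZMod n) ^ m)) '' OmegaSet n k i lam := by
    intro lam
    ext x
    simp only [OmegaSet, Set.mem_setOf_eq, Set.mem_image]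
    constructor
    · rintro ⟨b, hb, rfl⟩
      refine ⟨∑ j, (b j : ZMod n) * ((k ^ i j : (ZMod n)ˣ) : ZMod n), ⟨b, hb, rfl⟩, ?_⟩
      rw [Finset.sum_mul]
      refine Finset.sum_congr rfl fun j _ => ?_
      rw [mul_assoc]
      congr 1
      rw [pow_mod_orderOf, pow_add]
      push_cast
      ring
    · rintro ⟨y, ⟨b, hb, rfl⟩, rfl⟩
      refine ⟨b, hb, ?_⟩
      rw [Finset.sum_mul]
      refine Finset.sum_congr rfl fun j _ => ?_
      rw [mul_assoc]
      congr 1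
      rw [pow_mod_orderOf, pow_add]
      push_cast
      ring
  unfold wtSeq
  congr 1
  ext w
  simp only [Set.mem_setOf_eq]
  have hbij : Function.Bijective (fun y : ZMod n => y * ((k : ZMod n) ^ m)) := by
    have : (fun y : ZMod n => y * ((k : ZMod n) ^ m)) =
        fun y => y * ((k ^ m : (ZMod n)ˣ) : ZMod n) := by
      ext y; push_cast; ring
    rw [this]
    exact (Units.mulRight (k ^ m)).bijective
  constructor
  · rintro ⟨lam, hΩ, rfl⟩
    refine ⟨lam, ?_, rfl⟩
    have := key lam
    rw [hΩ] at this
    have himg : (fun y : ZMod n => y * ((k : ZMod n) ^ m)) '' (OmegaSet n k i lam) = Set.univ := this.symm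
    rw [Set.eq_univ_iff_forall]
    intro x
    have hx : (fun y : ZMod n => y * ((k : ZMod n) ^ m)) x ∈
        (fun y : ZMod n => y * ((k : ZMod n) ^ m)) '' (OmegaSet n k i lam) := by
      rw [himg]; trivial
    exact hbij.injective.mem_set_image.mp hx
  · rintro ⟨lam, hΩ, rfl⟩
    refine ⟨lam, ?_, rfl⟩
    rw [key lam, hΩ, Set.image_univ]
    exact Set.range_eq_univ.mpr hbij.surjective

noncomputable def enumF (S : Finset ℕ) : Fin S.card → ℕ :=
  fun j => (S.orderIsoOfFin rfl j.rev : ℕ)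

lemma enumF_strictAnti (S : Finset ℕ) : StrictAnti (enumF S) := by
  intro a b h
  have h1 : b.rev < a.rev := Fin.rev_lt_rev.mpr h
  exact_mod_cast (S.orderIsoOfFin rfl).strictMono h1

lemma range_enumF (S : Finset ℕ) : Set.range (enumF S) = ↑S := by
  ext x
  constructor
  · rintro ⟨j, rfl⟩
    exact (S.orderIsoOfFin rfl j.rev).2
  · intro hx
    refine ⟨((S.orderIsoOfFin rfl).symm ⟨x, hx⟩).rev, ?_⟩
    simp [enumF, Fin.rev_rev]

lemma half_le_wt_singleton (hn : 1 ≤ n) : n / 2 ≤ wtSeq n k (fun _ : Fin 1 => 0) := by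
  haveI : NeZero n := ⟨by omega⟩
  set W := { s | ∃ lam : Fin 1 → ℕ, OmegaSet n k (fun _ : Fin 1 => 0) lam = Set.univ ∧
      ∑ j, lam j = s } with hW
  have hne : W.Nonempty := by
    refine ⟨n, fun _ => n, ?_, by simp⟩
    rw [Set.eq_univ_iff_forall]
    intro x
    refine ⟨fun _ => (x.val : ℤ), fun j => ?_, ?_⟩
    · show |((x.val : ℤ))| ≤ ((n : ℕ) : ℤ)
      rw [abs_of_nonneg (by positivity)]
      have := le_of_lt (ZMod.val_lt x)
      exact_mod_cast this
    · simp [Fin.sum_univ_one, ZMod.natCast_val, ZMod.cast_id]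
  have hmem : wtSeq n k (fun _ : Fin 1 => 0) ∈ W := Nat.sInf_mem hne
  obtain ⟨lam, hΩ, hsum⟩ := hmem
  have hcard : (n : ℕ) ≤ 2 * lam 0 + 1 := by
    have hsub : (Finset.univ : Finset (ZMod n)) ⊆
        Finset.image (fun b : ℤ => (b : ZMod n)) (Finset.Icc (-(lam 0) : ℤ) (lam 0)) := by
      intro x _
      have hx : x ∈ OmegaSet n k (fun _ : Fin 1 => 0) lam := by rw [hΩ]; trivial
      obtain ⟨b, hb, hxe⟩ := hx
      refine Finset.mem_image.mpr ⟨b 0, ?_, ?_⟩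
      · rw [Finset.mem_Icc, ← abs_le]
        exact hb 0
      · rw [hxe]; simp [Fin.sum_univ_one]
    have h1 := Finset.card_le_card hsub
    have h2 := Finset.card_image_le (s := Finset.Icc (-(lam 0) : ℤ) (lam 0))
        (f := fun b : ℤ => (b : ZMod n))
    rw [Int.card_Icc] at h2
    have h3 : (Finset.univ : Finset (ZMod n)).card = n := by
      rw [Finset.card_univ, ZMod.card]
    have h4 : ((lam 0 : ℤ) + 1 - -(lam 0)).toNat = 2 * lam 0 + 1 := by omega
    omega
  have hsum1 : lam 0 = wtSeq n k (fun _ : Fin 1 => 0) := by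
    rw [← hsum, Fin.sum_univ_one]
  rw [← hsum1]
  omega

lemma exists_ne_zero_of_wt_lt {r : ℕ} (i : Fin r → ℕ) (hn : 1 ≤ n)
    (h0 : 0 ∈ Set.range i) (hlt : wtSeq n k i < n / 2)
    (hinj : Function.Injective i) :
    ∃ v ∈ Set.range i, v ≠ 0 := by
  by_contra h
  push_neg at h
  have hr : Set.range i = Set.range (fun _ : Fin 1 => 0) := by
    rw [Set.range_const]
    apply Set.eq_singleton_iff_unique_mem.mpr
    exact ⟨h0, fun v hv => h v hv⟩
  have hinj1 : Function.Injective (fun _ : Fin 1 => (0 : ℕ)) :=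
    fun a b _ => Subsingleton.elim a b
  have := wtSeq_eq_of_range_eq (n := n) (k := k) hinj1 hinj hr
  rw [this] at hlt
  exact absurd hlt (not_lt.mpr (half_le_wt_singleton hn))

lemma exists_minimal_prime_subset (α : ℕ) (T : Finset ℕ)
    (hT0 : 0 ∈ T) (hTle : ∀ e ∈ T, e ≤ α - 1)
    (hTwt : wtSeq n k (enumF T) = wtAlpha n k α) :
    ∃ T₁ : Finset ℕ, T₁ ⊆ T ∧ 0 ∈ T₁ ∧
      wtSeq n k (enumF T₁) = wtAlpha n k α ∧ IsMinimalPrimeSeq n k α (enumF T₁) := by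
  set C := { c : ℕ | ∃ T₁ : Finset ℕ, T₁ ⊆ T ∧ 0 ∈ T₁ ∧
      wtSeq n k (enumF T₁) = wtAlpha n k α ∧ T₁.card = c } with hC
  have hCne : C.Nonempty := ⟨T.card, T, subset_rfl, hT0, hTwt, rfl⟩
  obtain ⟨T₁, hsub, h0, hwt₁, hcard₁⟩ := Nat.sInf_mem hCne
  refine ⟨T₁, hsub, h0, hwt₁, ⟨⟨?_, enumF_strictAnti T₁⟩, ?_, hwt₁, ?_⟩⟩
  · intro j
    have hmem : enumF T₁ j ∈ (T₁ : Set ℕ) := by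
      rw [← range_enumF]; exact Set.mem_range_self j
    exact hTle _ (hsub hmem)
  · rw [range_enumF]; exact_mod_cast h0
  · intro q i₀ hseq h00 hsubr hner hwt0
    set F₀ : Finset ℕ := Finset.image i₀ Finset.univ with hF₀
    have hrange : Set.range i₀ = ↑F₀ := by
      rw [hF₀, Finset.coe_image, Finset.coe_univ, Set.image_univ]
    have hF₀sub : F₀ ⊆ T₁ := by
      intro x hx
      have hx1 : x ∈ Set.range i₀ := by rw [hrange]; exact_mod_cast hx
      have hx2 := hsubr hx1
      rw [range_enumF] at hx2
      exact_mod_cast hx2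
    have hF₀ne : F₀ ≠ T₁ := by
      intro h
      apply hner
      rw [hrange, h, range_enumF]
    have hF₀card : F₀.card < T₁.card :=
      Finset.card_lt_card (lt_of_le_of_ne hF₀sub hF₀ne)
    have hwtF₀ : wtSeq n k (enumF F₀) = wtAlpha n k α := by
      have heq := wtSeq_eq_of_range_eq (n := n) (k := k)
        hseq.2.injective (enumF_strictAnti F₀).injective
        (by rw [range_enumF, hrange])
      rw [heq, hwt0]
    have h0F₀ : 0 ∈ F₀ := by
      have : (0 : ℕ) ∈ Set.range i₀ := h00
      rw [hrange] at this
      exact_mod_cast this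
    have : F₀.card ∈ C := ⟨F₀, hF₀sub.trans hsub, h0F₀, hwtF₀, rfl⟩
    have := Nat.sInf_le this
    omega

end aux

/-- If `i` is a minimal prime sequence realizing `wt(n,k;α)` of smallest degree
and `i′` is a minimal prime sequence realizing `wt(n,k;α)` of largest
codegree, then `deg(i) + codeg(i′) = α`. -/
theorem deg_add_codeg_eq_of_min_deg_max_codeg (n : ℕ) (hn : 3 ≤ n)
    (k : (ZMod n)ˣ) (α : ℕ) (hα : orderOf k = α) (hα2 : 2 ≤ α)
    (hwt : wtAlpha n k α < n / 2)
    (r : ℕ) (i : Fin r → ℕ) (hi : IsMinimalPrimeSeq n k α i)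
    (hmin : ∀ (q : ℕ) (i'' : Fin q → ℕ), IsMinimalPrimeSeq n k α i'' →
      degSeq i ≤ degSeq i'')
    (s : ℕ) (i' : Fin s → ℕ) (hi' : IsMinimalPrimeSeq n k α i')
    (hmax : ∀ (q : ℕ) (i'' : Fin q → ℕ), IsMinimalPrimeSeq n k α i'' →
      codegSeq i'' ≤ codegSeq i') :
    degSeq i + codegSeq i' = α := by
  have hn1 : 1 ≤ n := by omega
  obtain ⟨hiseq, hi0, hiw, _⟩ := hi
  obtain ⟨hiseq', hi0', hiw', _⟩ := hi'
  set d := degSeq i with hd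
  set c := codegSeq i' with hc
  -- basic facts about d
  have hdmem : d ∈ Set.range i := by
    rw [hd, degSeq]
    exact Nat.sSup_mem ⟨0, hi0⟩ (Set.finite_range i).bddAbove
  have hdle : d ≤ α - 1 := by
    obtain ⟨jd, hjd⟩ := hdmem
    rw [← hjd]; exact hiseq.1 jd
  have hle_d : ∀ e ∈ Set.range i, e ≤ d :=
    fun e he => le_csSup (Set.finite_range i).bddAbove he
  -- basic facts about c
  have hcset : ∃ v ∈ Set.range i', v ≠ 0 :=
    exists_ne_zero_of_wt_lt i' hn1 hi0' (by rw [hiw']; exact hwt) hiseq'.2.injective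
  have hcmem : c ∈ { v | v ∈ Set.range i' ∧ v ≠ 0 } := by
    rw [hc, codegSeq]
    exact Nat.sInf_mem (by obtain ⟨v, hv, hv0⟩ := hcset; exact ⟨v, hv, hv0⟩)
  have hcne : c ≠ 0 := hcmem.2
  have hcle : c ≤ α - 1 := by
    obtain ⟨jc, hjc⟩ := hcmem.1
    rw [← hjc]; exact hiseq'.1 jc
  have hc_le : ∀ e ∈ Set.range i', e ≠ 0 → c ≤ e :=
    fun e he he0 => Nat.sInf_le ⟨he, he0⟩
  -- injectivity of shift maps
  have hshift_inj : ∀ {q : ℕ} (f : Fin q → ℕ), Function.Injective f →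
      (∀ j, f j ≤ α - 1) → ∀ m : ℕ, Function.Injective (fun j => (f j + m) % α) := by
    intro q f hfinj hfle m a b hab
    simp only at hab
    have h1 : f a + m ≡ f b + m [MOD α] := hab
    have h2 : f a ≡ f b [MOD α] := Nat.ModEq.add_right_cancel' m h1
    have h3 : f a % α = f b % α := h2
    rw [Nat.mod_eq_of_lt (by have := hfle a; omega),
        Nat.mod_eq_of_lt (by have := hfle b; omega)] at h3
    exact hfinj h3
  -- ===== Direction 1 : α ≤ d + c =====
  have hdir1 : α ≤ d + c := by
    set i₂ : Fin r → ℕ := fun j => (i j + (α - d)) % α with hi₂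
    set T : Finset ℕ := Finset.image i₂ Finset.univ with hT
    have hrangeT : Set.range i₂ = ↑T := by
      rw [hT, Finset.coe_image, Finset.coe_univ, Set.image_univ]
    have hT0 : 0 ∈ T := by
      obtain ⟨jd, hjd⟩ := hdmem
      refine Finset.mem_image.mpr ⟨jd, Finset.mem_univ _, ?_⟩
      rw [hi₂]
      simp only
      rw [hjd]
      have : d + (α - d) = α := by omega
      rw [this, Nat.mod_self]
    have hTle : ∀ e ∈ T, e ≤ α - 1 := by
      intro e he
      obtain ⟨j, _, rfl⟩ := Finset.mem_image.mp he
      have h1 := Nat.mod_lt (i j + (α - d)) (show 0 < α by omega)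
      have h2 : i₂ j = (i j + (α - d)) % α := rfl
      omega
    have hi₂inj : Function.Injective i₂ :=
      hshift_inj i hiseq.2.injective hiseq.1 (α - d)
    have hTwt : wtSeq n k (enumF T) = wtAlpha n k α := by
      have h1 := wtSeq_eq_of_range_eq (n := n) (k := k)
        hi₂inj (enumF_strictAnti T).injective (by rw [range_enumF, hrangeT])
      have h2 : wtSeq n k i₂ = wtSeq n k i := by
        rw [hi₂]
        have := wtSeq_shift (n := n) (k := k) i (α - d)
        rwa [hα] at this
      rw [h1, h2, hiw]
    obtain ⟨T₁, hT₁sub, hT₁0, hT₁wt, hT₁mp⟩ :=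
      exists_minimal_prime_subset α T hT0 hTle hTwt
    have hcodeg := hmax _ _ hT₁mp
    -- codegSeq (enumF T₁) ≥ α - d
    have hT₁ne : ∃ v ∈ Set.range (enumF T₁), v ≠ 0 := by
      refine exists_ne_zero_of_wt_lt (enumF T₁) hn1 ?_ (by rw [hT₁wt]; exact hwt)
        (enumF_strictAnti T₁).injective
      rw [range_enumF]; exact_mod_cast hT₁0
    have hc₁mem : codegSeq (enumF T₁) ∈
        { v | v ∈ Set.range (enumF T₁) ∧ v ≠ 0 } := by
      rw [codegSeq]
      exact Nat.sInf_mem (by obtain ⟨v, hv, hv0⟩ := hT₁ne; exact ⟨v, hv, hv0⟩)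
    have hc₁T : codegSeq (enumF T₁) ∈ T := by
      have := hc₁mem.1
      rw [range_enumF] at this
      exact hT₁sub (by exact_mod_cast this)
    obtain ⟨j, _, hj⟩ := Finset.mem_image.mp hc₁T
    have hij_le : i j ≤ d := hle_d _ (Set.mem_range_self j)
    have hij_ne : i j ≠ d := by
      intro h
      apply hc₁mem.2
      rw [← hj, hi₂]
      simp only
      rw [h]
      have : d + (α - d) = α := by omega
      rw [this, Nat.mod_self]
    have hlt : i j + (α - d) < α := by omega
    have : codegSeq (enumF T₁) = i j + (α - d) := by
      rw [← hj, hi₂]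
      simp only
      rw [Nat.mod_eq_of_lt hlt]
    omega
  -- ===== Direction 2 : d + c ≤ α =====
  have hdir2 : d + c ≤ α := by
    set i₃ : Fin s → ℕ := fun j => (i' j + (α - c)) % α with hi₃
    set U : Finset ℕ := Finset.image i₃ Finset.univ with hU
    have hrangeU : Set.range i₃ = ↑U := by
      rw [hU, Finset.coe_image, Finset.coe_univ, Set.image_univ]
    have hU0 : 0 ∈ U := by
      obtain ⟨jc, hjc⟩ := hcmem.1
      refine Finset.mem_image.mpr ⟨jc, Finset.mem_univ _, ?_⟩
      rw [hi₃]
      simp only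
      rw [hjc]
      have : c + (α - c) = α := by omega
      rw [this, Nat.mod_self]
    have hUle : ∀ e ∈ U, e ≤ α - 1 := by
      intro e he
      obtain ⟨j, _, rfl⟩ := Finset.mem_image.mp he
      have h1 := Nat.mod_lt (i' j + (α - c)) (show 0 < α by omega)
      have h2 : i₃ j = (i' j + (α - c)) % α := rfl
      omega
    have hUbd : ∀ e ∈ U, e ≤ α - c := by
      intro e he
      obtain ⟨j, _, rfl⟩ := Finset.mem_image.mp he
      rw [hi₃]
      simp only
      by_cases h0 : i' j = 0
      · rw [h0, zero_add, Nat.mod_eq_of_lt (by omega)]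
      · have hcj : c ≤ i' j := hc_le _ (Set.mem_range_self j) h0
        have hjle : i' j ≤ α - 1 := hiseq'.1 j
        have heq : i' j + (α - c) = (i' j - c) + α := by omega
        rw [heq, Nat.add_mod_right, Nat.mod_eq_of_lt (by omega)]
        omega
    have hi₃inj : Function.Injective i₃ :=
      hshift_inj i' hiseq'.2.injective hiseq'.1 (α - c)
    have hUwt : wtSeq n k (enumF U) = wtAlpha n k α := by
      have h1 := wtSeq_eq_of_range_eq (n := n) (k := k)
        hi₃inj (enumF_strictAnti U).injective (by rw [range_enumF, hrangeU])
      have h2 : wtSeq n k i₃ = wtSeq n k i' := by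
        rw [hi₃]
        have := wtSeq_shift (n := n) (k := k) i' (α - c)
        rwa [hα] at this
      rw [h1, h2, hiw']
    obtain ⟨U₁, hU₁sub, hU₁0, hU₁wt, hU₁mp⟩ :=
      exists_minimal_prime_subset α U hU0 hUle hUwt
    have hdeg := hmin _ _ hU₁mp
    have hdegU₁ : degSeq (enumF U₁) ≤ α - c := by
      rw [degSeq]
      apply csSup_le
      · refine ⟨0, ?_⟩
        rw [range_enumF]; exact_mod_cast hU₁0
      · intro e he
        rw [range_enumF] at he
        exact hUbd e (hU₁sub (by exact_mod_cast he))
    omega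
  omega
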